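/- Let ≻₁ and ≻₂ be two strict linear orders on a finite set A of m alternatives, and for i ∈ {1,2} and a ∈ A let rkᵢ(a) = |{b ∈ A : b ≻ᵢ a}| denote the number of alternatives that voter i strictly prefers to a. Define the embedding E by E(v₁) = (−m², 0), E(v₂) = (0, −m²), and E(a) = (rk₁(a), rk₂(a)) for every alternative a. Then E is a 2-dimensional Euclidean embedding of the two-voter profile (≻₁, ≻₂): for each i ∈ {1,2} and all distinct alternatives a, b, one has a ≻ᵢ b if and only if ‖E(a) − E(vᵢ)‖ < ‖E(b) − E(vᵢ)‖, where ‖·‖ denotes the Euclidean distance in ℝ². -/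
import Mathlib

noncomputable def pt (x y : ℝ) : EuclideanSpace ℝ (Fin 2) :=
  (WithLp.equiv 2 (Fin 2 → ℝ)).symm ![x, y]

lemma dist_pt (x y u v : ℝ) :
    dist (pt x y) (pt u v) = Real.sqrt ((x - u) ^ 2 + (y - v) ^ 2) := by
  simp [pt, EuclideanSpace.dist_eq, Fin.sum_univ_two, Real.dist_eq, sq_abs]

section rk
variable {A : Type*} [Fintype A] (r : A → A → Prop) [IsStrictTotalOrder A r]

lemma card_eq_ncard (x : A) : Nat.card {c : A // r c x} = ({c : A | r c x}).ncard :=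
  Nat.card_coe_set_eq _

lemma rk_lt_of_r {a b : A} (h : r a b) :
    Nat.card {c : A // r c a} < Nat.card {c : A // r c b} := by
  rw [card_eq_ncard, card_eq_ncard]
  apply Set.ncard_lt_ncard _ (Set.toFinite _)
  constructor
  · intro c hc
    exact _root_.trans hc h
  · intro hsub
    exact irrefl_of r a (hsub h)

lemma rk_lt_card (a : A) : Nat.card {c : A // r c a} < Fintype.card A := by
  rw [card_eq_ncard, ← Nat.card_eq_fintype_card, ← Set.ncard_univ]
  apply Set.ncard_lt_ncard _ (Set.toFinite _)
  constructor
  · exact Set.subset_univ _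
  · intro hsub
    exact irrefl_of r a (hsub (Set.mem_univ a))

lemma r_iff_rk_lt {a b : A} (hab : a ≠ b) :
    r a b ↔ Nat.card {c : A // r c a} < Nat.card {c : A // r c b} := by
  constructor
  · exact rk_lt_of_r r
  · intro h
    rcases trichotomous_of r a b with h1 | h1 | h1
    · exact h1
    · exact absurd h1 hab
    · exact absurd (rk_lt_of_r r h1) (by omega)

end rk

lemma key_ineq (m xa ya xb yb : ℕ) (hya : ya < m) (h : xa < xb) :
    ((xa : ℝ) + m ^ 2) ^ 2 + (ya : ℝ) ^ 2 < ((xb : ℝ) + m ^ 2) ^ 2 + (yb : ℝ) ^ 2 := by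
  have hm : (0:ℝ) < m := by
    have : 0 < m := Nat.lt_of_le_of_lt (Nat.zero_le ya) hya
    exact_mod_cast this
  have h' : (xa : ℝ) + 1 ≤ xb := by exact_mod_cast h
  have hya' : (ya : ℝ) < m := by exact_mod_cast hya
  have h1 : (0:ℝ) ≤ xa := Nat.cast_nonneg xa
  have h2 : (0:ℝ) ≤ ya := Nat.cast_nonneg ya
  nlinarith [sq_nonneg ((yb:ℝ)), mul_pos hm hm]

lemma main_iff (m xa ya xb yb : ℕ) (hya : ya < m) (hyb : yb < m)
    (hne : xa ≠ xb) :
    xa < xb ↔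
      Real.sqrt (((xa : ℝ) + m ^ 2) ^ 2 + (ya : ℝ) ^ 2) <
        Real.sqrt (((xb : ℝ) + m ^ 2) ^ 2 + (yb : ℝ) ^ 2) := by
  constructor
  · intro h
    exact Real.sqrt_lt_sqrt (by positivity) (key_ineq m xa ya xb yb hya h)
  · intro h
    by_contra hc
    push_neg at hc
    have hlt : xb < xa := lt_of_le_of_ne hc (Ne.symm hne)
    have := key_ineq m xb yb xa ya hyb hlt
    have := Real.sqrt_lt_sqrt (by positivity) this
    linarith

/-- Let `≻₁, ≻₂` be two strict linear orders on a finite set `A` of `m` alternatives,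
and let `rk i a` be the number of alternatives that voter `i` strictly prefers to `a`.
Place voter `1` at `(−m², 0)`, voter `2` at `(0, −m²)`, and each alternative `a` at
`(rk₁(a), rk₂(a))`.  Then this is a 2-dimensional Euclidean embedding of the
two-voter profile: for each voter `i` and distinct alternatives `a, b`,
`a ≻ᵢ b` iff `‖E(a) − E(vᵢ)‖ < ‖E(b) − E(vᵢ)‖`. -/
theorem rank_embedding_is_euclidean
    {A : Type*} [Fintype A]
    (pref : Fin 2 → A → A → Prop)
    (hpref : ∀ i, IsStrictTotalOrder A (pref i))
    (m : ℕ) (hm : Fintype.card A = m)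
    (rk : Fin 2 → A → ℕ)
    (hrk : ∀ i a, rk i a = Nat.card {b : A // pref i b a})
    (EV : Fin 2 → EuclideanSpace ℝ (Fin 2))
    (hEV0 : EV 0 = pt (-(m : ℝ) ^ 2) 0)
    (hEV1 : EV 1 = pt 0 (-(m : ℝ) ^ 2))
    (EA : A → EuclideanSpace ℝ (Fin 2))
    (hEA : ∀ a, EA a = pt (rk 0 a) (rk 1 a)) :
    ∀ (i : Fin 2) (a b : A), a ≠ b →
      (pref i a b ↔ dist (EA a) (EV i) < dist (EA b) (EV i)) := by
  intro i a b hab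
  have hrklt : ∀ (j : Fin 2) (c : A), rk j c < m := by
    intro j c
    haveI := hpref j
    rw [hrk, ← hm]
    exact rk_lt_card (pref j) c
  have hiff : ∀ j : Fin 2, (pref j a b ↔ rk j a < rk j b) := by
    intro j
    haveI := hpref j
    rw [hrk, hrk]
    exact r_iff_rk_lt (pref j) hab
  have hne : ∀ j : Fin 2, rk j a ≠ rk j b := by
    intro j
    haveI := hpref j
    rcases trichotomous_of (pref j) a b with h1 | h1 | h1
    · exact Nat.ne_of_lt ((hiff j).mp h1)
    · exact absurd h1 hab
    · have : rk j b < rk j a := by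
        rw [hrk, hrk]; exact rk_lt_of_r (pref j) h1
      omega
  have hi : i = 0 ∨ i = 1 := by omega
  rcases hi with rfl | rfl
  · rw [hEV0, hEA, hEA, dist_pt, dist_pt, hiff 0]
    have := main_iff m (rk 0 a) (rk 1 a) (rk 0 b) (rk 1 b)
      (hrklt 1 a) (hrklt 1 b) (hne 0)
    convert this using 3 <;> ring
  · rw [hEV1, hEA, hEA, dist_pt, dist_pt, hiff 1]
    have := main_iff m (rk 1 a) (rk 0 a) (rk 1 b) (rk 0 b)
      (hrklt 0 a) (hrklt 0 b) (hne 1)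
    convert this using 3 <;> ring
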